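/- Let G be a graph on 2n vertices (n sufficiently large) and N = {x₁,y₁,…,x_t,y_t} ⊆ V(G) a set of 2t distinct vertices, 1 ≤ t ≤ n. Then V(G) can be partitioned into sets A and B with |A| = |B| = n, |A ∩ {x_i, y_i}| = 1 for each i, and |deg_A(v) − deg_B(v)| ≤ n^{2/3} for every vertex v, where deg_A(v) (resp. deg_B(v)) is the number of neighbors of v in A (resp. B). -/

import Mathlib

open Finset Function Real


lemma sum_prod_fun {n : ℕ} (g : Fin n → Bool → ℝ) :
    ∑ ε : Fin n → Bool, ∏ i, g i (ε i) = ∏ i, (g i true + g i false) := by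
  classical
  rw [← Fintype.prod_sum g]
  simp

lemma chernoff_count {n : ℕ} (c : Fin n → ℝ) (hc : ∀ i, |c i| ≤ 1) (s L : ℝ) (hs : 0 ≤ s) :
    ((Finset.univ.filter (fun ε : Fin n → Bool =>
        L < ∑ i, (if ε i then (1:ℝ) else -1) * c i)).card : ℝ)
      ≤ 2 ^ n * Real.exp (n * s ^ 2 / 2 - s * L) := by
  classical
  set D : (Fin n → Bool) → ℝ := fun ε => ∑ i, (if ε i then (1:ℝ) else -1) * c i with hD
  have key : ∑ ε : Fin n → Bool, Real.exp (s * D ε) ≤ (2 * Real.exp (s ^ 2 / 2)) ^ n := by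
    have h1 : ∀ ε : Fin n → Bool, Real.exp (s * D ε)
        = ∏ i, Real.exp (s * ((if ε i then (1:ℝ) else -1) * c i)) := by
      intro ε; rw [hD, Finset.mul_sum, Real.exp_sum]
    have h2 : ∑ ε : Fin n → Bool, Real.exp (s * D ε)
        = ∏ i, (Real.exp (s * c i) + Real.exp (-(s * c i))) := by
      simp_rw [h1]
      rw [sum_prod_fun (fun i b => Real.exp (s * ((if b then (1:ℝ) else -1) * c i)))]
      congr 1; funext i
      norm_num
    rw [h2]
    have h3 : ∏ i, (Real.exp (s * c i) + Real.exp (-(s * c i)))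
        ≤ ∏ _i : Fin n, (2 * Real.exp (s ^ 2 / 2)) := by
      apply Finset.prod_le_prod
      · intro i _; positivity
      · intro i _
        have hcosh : Real.exp (s * c i) + Real.exp (-(s * c i)) = 2 * Real.cosh (s * c i) := by
          rw [Real.cosh_eq]; ring
        rw [hcosh]
        have h2' : Real.cosh (s * c i) ≤ Real.exp ((s * c i) ^ 2 / 2) :=
          Real.cosh_le_exp_half_sq _
        have h3' : (s * c i) ^ 2 ≤ s ^ 2 := by
          have hcc : c i ^ 2 ≤ 1 := by nlinarith [sq_abs (c i), hc i, abs_nonneg (c i)]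
          nlinarith [sq_nonneg s]
        have h4 : Real.exp ((s * c i) ^ 2 / 2) ≤ Real.exp (s ^ 2 / 2) :=
          Real.exp_le_exp.2 (by linarith)
        linarith
    calc ∏ i, (Real.exp (s * c i) + Real.exp (-(s * c i)))
        ≤ ∏ _i : Fin n, (2 * Real.exp (s ^ 2 / 2)) := h3
      _ = (2 * Real.exp (s ^ 2 / 2)) ^ n := by simp
  calc ((Finset.univ.filter (fun ε : Fin n → Bool => L < D ε)).card : ℝ)
      = ∑ ε ∈ Finset.univ.filter (fun ε : Fin n → Bool => L < D ε), (1:ℝ) := by simp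
    _ ≤ ∑ ε ∈ Finset.univ.filter (fun ε : Fin n → Bool => L < D ε),
          Real.exp (s * (D ε - L)) := by
        apply Finset.sum_le_sum
        intro ε hε
        have h5 := (Finset.mem_filter.1 hε).2
        have h6 : 0 ≤ s * (D ε - L) := mul_nonneg hs (by linarith)
        calc (1:ℝ) = Real.exp 0 := by simp
          _ ≤ Real.exp (s * (D ε - L)) := Real.exp_le_exp.2 h6
    _ ≤ ∑ ε : Fin n → Bool, Real.exp (s * (D ε - L)) :=
        Finset.sum_le_sum_of_subset_of_nonneg (Finset.filter_subset _ _)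
          (fun _ _ _ => (Real.exp_pos _).le)
    _ = Real.exp (-(s * L)) * ∑ ε : Fin n → Bool, Real.exp (s * D ε) := by
        rw [Finset.mul_sum]
        congr 1; funext ε
        rw [← Real.exp_add]; ring_nf
    _ ≤ Real.exp (-(s * L)) * (2 * Real.exp (s ^ 2 / 2)) ^ n :=
        mul_le_mul_of_nonneg_left key (Real.exp_pos _).le
    _ = 2 ^ n * Real.exp (n * s ^ 2 / 2 - s * L) := by
        rw [mul_pow, ← Real.exp_nat_mul]
        rw [show (n:ℝ) * s ^ 2 / 2 - s * L = -(s * L) + n * (s ^ 2 / 2) by ring, Real.exp_add]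
        ring


lemma chernoff_abs {n : ℕ} (c : Fin n → ℝ) (hc : ∀ i, |c i| ≤ 1) (s L : ℝ) (hs : 0 ≤ s) :
    ((Finset.univ.filter (fun ε : Fin n → Bool =>
        L < |∑ i, (if ε i then (1:ℝ) else -1) * c i|)).card : ℝ)
      ≤ 2 * (2 ^ n * Real.exp (n * s ^ 2 / 2 - s * L)) := by
  classical
  have hsub : (Finset.univ.filter (fun ε : Fin n → Bool =>
        L < |∑ i, (if ε i then (1:ℝ) else -1) * c i|))
      ⊆ (Finset.univ.filter (fun ε : Fin n → Bool =>
          L < ∑ i, (if ε i then (1:ℝ) else -1) * c i))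
        ∪ (Finset.univ.filter (fun ε : Fin n → Bool =>
          L < ∑ i, (if ε i then (1:ℝ) else -1) * (-c) i)) := by
    intro ε hε
    have h := (Finset.mem_filter.1 hε).2
    rw [Finset.mem_union, Finset.mem_filter, Finset.mem_filter]
    rcases lt_abs.1 h with h1 | h1
    · exact Or.inl ⟨Finset.mem_univ _, h1⟩
    · refine Or.inr ⟨Finset.mem_univ _, ?_⟩
      have : ∑ i, (if ε i then (1:ℝ) else -1) * (-c) i
          = -∑ i, (if ε i then (1:ℝ) else -1) * c i := by
        rw [← Finset.sum_neg_distrib]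
        congr 1; funext i; simp
      rw [this]; exact h1
  have hc' : ∀ i, |(-c) i| ≤ 1 := fun i => by simpa using hc i
  calc ((Finset.univ.filter (fun ε : Fin n → Bool =>
        L < |∑ i, (if ε i then (1:ℝ) else -1) * c i|)).card : ℝ)
      ≤ (((Finset.univ.filter (fun ε : Fin n → Bool =>
          L < ∑ i, (if ε i then (1:ℝ) else -1) * c i))
        ∪ (Finset.univ.filter (fun ε : Fin n → Bool =>
          L < ∑ i, (if ε i then (1:ℝ) else -1) * (-c) i))).card : ℝ) := by
        exact_mod_cast Finset.card_le_card hsub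
    _ ≤ (((Finset.univ.filter (fun ε : Fin n → Bool =>
          L < ∑ i, (if ε i then (1:ℝ) else -1) * c i)).card : ℝ)
        + ((Finset.univ.filter (fun ε : Fin n → Bool =>
          L < ∑ i, (if ε i then (1:ℝ) else -1) * (-c) i)).card : ℝ)) := by
        exact_mod_cast Finset.card_union_le _ _
    _ ≤ 2 * (2 ^ n * Real.exp (n * s ^ 2 / 2 - s * L)) := by
        have h1 := chernoff_count c hc s L hs
        have h2 := chernoff_count (-c) hc' s L hs
        linarith

lemma numeric_bound {n : ℕ} (hn : 1536 ^ 3 ≤ n) :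
    4 * (n : ℝ) * Real.exp (-((n : ℝ) ^ ((1:ℝ)/3) / 2)) < 1 := by
  set p : ℝ := (n : ℝ) ^ ((1:ℝ)/3) with hpdef
  have hn0 : (0:ℝ) ≤ n := Nat.cast_nonneg n
  have hp0 : 0 ≤ p := Real.rpow_nonneg hn0 _
  have hp3 : p ^ 3 = n := by
    rw [hpdef, ← Real.rpow_natCast ((n:ℝ) ^ ((1:ℝ)/3)) 3, ← Real.rpow_mul hn0]
    norm_num
  have hnn : (1536:ℝ) ^ 3 ≤ (n:ℝ) := by exact_mod_cast hn
  have hp : (1536:ℝ) ≤ p := by nlinarith [sq_nonneg (p - 1536), sq_nonneg (p + 1536)]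
  set z : ℝ := p / 2 with hz
  have hz0 : 0 ≤ z := by positivity
  have hsum := Real.sum_le_exp_of_nonneg hz0 5
  have hsum' : 1 + z + z^2/2 + z^3/6 + z^4/24 ≤ Real.exp z := by
    have : ∑ i ∈ Finset.range 5, z ^ i / (Nat.factorial i) = 1 + z + z^2/2 + z^3/6 + z^4/24 := by
      simp [Finset.sum_range_succ, Nat.factorial]
    linarith [this ▸ hsum]
  have hz4 : 4 * (n:ℝ) ≤ z^4/24 := by
    have : z^4 = p * p^3 / 16 := by rw [hz]; ring
    rw [this, hp3]
    nlinarith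
  have hlt : 4 * (n:ℝ) < Real.exp z := by nlinarith [sq_nonneg z, pow_nonneg hz0 3]
  calc 4 * (n:ℝ) * Real.exp (-z) < Real.exp z * Real.exp (-z) :=
        mul_lt_mul_of_pos_right hlt (Real.exp_pos _)
    _ = 1 := by rw [← Real.exp_add]; simp


lemma exists_pairing {V : Type} [Fintype V] [DecidableEq V] {n t : ℕ}
    (hV : Fintype.card V = 2 * n) (ht : t ≤ n) (x y : Fin t → V)
    (inj : Function.Injective (Sum.elim x y)) :
    ∃ a b : Fin n → V, Function.Bijective (Sum.elim a b) ∧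
      ∀ i : Fin t, a (Fin.castLE ht i) = x i ∧ b (Fin.castLE ht i) = y i := by
  classical
  set f : Fin t ⊕ Fin t → V := Sum.elim x y with hf
  set S : Finset V := Finset.univ \ Finset.image f Finset.univ with hS
  have hcardim : (Finset.image f Finset.univ).card = 2 * t := by
    rw [Finset.card_image_of_injective _ inj]
    simp [two_mul]
  have hcardS : S.card = 2 * (n - t) := by
    rw [hS, Finset.card_sdiff_of_subset (Finset.subset_univ _), Finset.card_univ, hV, hcardim]
    omega
  have hcard2 : Fintype.card (Fin (n-t) ⊕ Fin (n-t)) = Fintype.card S := by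
    simp [hcardS, two_mul]
  let g : (Fin (n-t) ⊕ Fin (n-t)) ≃ {v // v ∈ S} := Fintype.equivOfCardEq hcard2
  have hnt : n = t + (n - t) := by omega
  let idx : Fin n → Fin t ⊕ Fin (n-t) := fun i => finSumFinEquiv.symm (Fin.cast hnt i)
  have hidxinj : Function.Injective idx :=
    finSumFinEquiv.symm.injective.comp (Fin.cast_injective hnt)
  have hidxcast : ∀ i : Fin t, idx (Fin.castLE ht i) = Sum.inl i := by
    intro i
    simp only [idx, Equiv.symm_apply_eq]
    ext
    simp [finSumFinEquiv]
  set a : Fin n → V := fun i => Sum.elim x (fun j => ((g (Sum.inl j) : V))) (idx i) with ha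
  set b : Fin n → V := fun i => Sum.elim y (fun j => ((g (Sum.inr j) : V))) (idx i) with hb
  have hxS : ∀ i : Fin t, x i ∉ S := by
    intro i hi
    rw [hS, Finset.mem_sdiff] at hi
    exact hi.2 (Finset.mem_image_of_mem f (Finset.mem_univ (Sum.inl i)))
  have hyS : ∀ i : Fin t, y i ∉ S := by
    intro i hi
    rw [hS, Finset.mem_sdiff] at hi
    exact hi.2 (Finset.mem_image_of_mem f (Finset.mem_univ (Sum.inr i)))
  have hgS : ∀ w, ((g w : V)) ∈ S := fun w => (g w).2
  have hginj : ∀ w w', ((g w : V)) = ((g w' : V)) → w = w' :=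
    fun w w' h => g.injective (Subtype.ext h)
  have hxinj : ∀ i j : Fin t, x i = x j → i = j := by
    intro i j h
    have := inj (show Sum.elim x y (Sum.inl i) = Sum.elim x y (Sum.inl j) from h)
    simpa using this
  have hyinj : ∀ i j : Fin t, y i = y j → i = j := by
    intro i j h
    have := inj (show Sum.elim x y (Sum.inr i) = Sum.elim x y (Sum.inr j) from h)
    simpa using this
  have hxy : ∀ i j : Fin t, x i ≠ y j := by
    intro i j h
    have := inj (show Sum.elim x y (Sum.inl i) = Sum.elim x y (Sum.inr j) from h)
    simp at this
  set F : (Fin t ⊕ Fin (n-t)) ⊕ (Fin t ⊕ Fin (n-t)) → V :=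
    Sum.elim (Sum.elim x (fun j => ((g (Sum.inl j) : V))))
             (Sum.elim y (fun j => ((g (Sum.inr j) : V)))) with hF
  have hFinj : Function.Injective F := by
    rintro (u | u) (v | v) h <;> rcases u with u | u <;> rcases v with v | v <;>
      simp only [hF, Sum.elim_inl, Sum.elim_inr] at h
    · exact congrArg (Sum.inl ∘ Sum.inl) (hxinj _ _ h)
    · exact absurd (h ▸ hgS (Sum.inl v)) (hxS u)
    · exact absurd (h.symm ▸ hgS (Sum.inl u)) (hxS v)
    · exact congrArg (Sum.inl ∘ Sum.inr) (Sum.inl_injective (hginj _ _ h))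
    · exact absurd h (hxy u v)
    · exact absurd (h ▸ hgS (Sum.inr v)) (hxS u)
    · exact absurd (h.symm ▸ hgS (Sum.inl u)) (hyS v)
    · exact absurd (hginj _ _ h) (by simp)
    · exact absurd h.symm (hxy v u)
    · exact absurd (h ▸ hgS (Sum.inl v)) (hyS u)
    · exact absurd (h.symm ▸ hgS (Sum.inr u)) (hxS v)
    · exact absurd (hginj _ _ h) (by simp)
    · exact congrArg (Sum.inr ∘ Sum.inl) (hyinj _ _ h)
    · exact absurd (h ▸ hgS (Sum.inr v)) (hyS u)
    · exact absurd (h.symm ▸ hgS (Sum.inr u)) (hyS v)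
    · exact congrArg (Sum.inr ∘ Sum.inr) (Sum.inr_injective (hginj _ _ h))
  have hcomp : Sum.elim a b = F ∘ Sum.map idx idx := by
    funext u; rcases u with u | u <;> rfl
  have habinj : Function.Injective (Sum.elim a b) := by
    rw [hcomp]
    exact hFinj.comp (hidxinj.sumMap hidxinj)
  refine ⟨a, b, ?_, ?_⟩
  · rw [Fintype.bijective_iff_injective_and_card]
    refine ⟨habinj, by simp [hV, two_mul]⟩
  · intro i
    constructor
    · rw [ha]; simp [hidxcast i]
    · rw [hb]; simp [hidxcast i]


/-- Shan's partition lemma: for sufficiently large `n`, any graph on `2n` vertices with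
`2t` distinguished distinct vertices `x₁,y₁,…,x_t,y_t` (`1 ≤ t ≤ n`) admits a
partition `(A,B)` with `|A| = |B| = n`, splitting each pair `{x_i, y_i}`, and with
`|deg_A(v) − deg_B(v)| ≤ n^{2/3}` for every vertex `v`. -/
theorem partition_lemma :
    ∃ n₀ : ℕ, ∀ n : ℕ, n₀ ≤ n →
      ∀ (V : Type) [Fintype V] [DecidableEq V] (G : SimpleGraph V) [DecidableRel G.Adj],
        Fintype.card V = 2 * n →
        ∀ (t : ℕ) (x y : Fin t → V), 1 ≤ t → t ≤ n →
          Function.Injective (Sum.elim x y) →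
          ∃ A B : Finset V, Disjoint A B ∧ A ∪ B = Finset.univ ∧
            A.card = n ∧ B.card = n ∧
            (∀ i : Fin t, Xor' (x i ∈ A) (y i ∈ A)) ∧
            ∀ v : V,
              |((A.filter fun w => G.Adj v w).card : ℝ)
                - ((B.filter fun w => G.Adj v w).card : ℝ)| ≤ (n : ℝ) ^ ((2 : ℝ) / 3) := by
  classical
  refine ⟨1536 ^ 3, fun n hn V _ _ G _ hV t x y ht1 htn inj => ?_⟩
  obtain ⟨a, b, hbij, hcast⟩ := exists_pairing hV htn x y inj
  have habinj := hbij.1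
  have hainj : ∀ i j : Fin n, a i = a j → i = j := by
    intro i j h
    have := habinj (show Sum.elim a b (Sum.inl i) = Sum.elim a b (Sum.inl j) from h)
    simpa using this
  have hbinj : ∀ i j : Fin n, b i = b j → i = j := by
    intro i j h
    have := habinj (show Sum.elim a b (Sum.inr i) = Sum.elim a b (Sum.inr j) from h)
    simpa using this
  have hab : ∀ i j : Fin n, a i ≠ b j := by
    intro i j h
    have := habinj (show Sum.elim a b (Sum.inl i) = Sum.elim a b (Sum.inr j) from h)
    simp at this
  -- candidate partitions
  set pA : (Fin n → Bool) → Fin n → V := fun ε i => if ε i then a i else b i with hpA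
  set pB : (Fin n → Bool) → Fin n → V := fun ε i => if ε i then b i else a i with hpB
  have hpAinj : ∀ ε, Function.Injective (pA ε) := by
    intro ε i j h
    simp only [hpA] at h
    split_ifs at h with h1 h2 h2
    · exact hainj _ _ h
    · exact absurd h (hab _ _)
    · exact absurd h.symm (hab _ _)
    · exact hbinj _ _ h
  have hpBinj : ∀ ε, Function.Injective (pB ε) := by
    intro ε i j h
    simp only [hpB] at h
    split_ifs at h with h1 h2 h2
    · exact hbinj _ _ h
    · exact absurd h.symm (hab _ _)
    · exact absurd h (hab _ _)
    · exact hainj _ _ h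
  -- the coefficient vectors
  set c : V → Fin n → ℝ := fun v i =>
    (if G.Adj v (a i) then (1:ℝ) else 0) - (if G.Adj v (b i) then (1:ℝ) else 0) with hcdef
  have hc1 : ∀ v i, |c v i| ≤ 1 := by
    intro v i
    simp only [hcdef]
    split_ifs <;> norm_num
  -- rpow bookkeeping
  have hn1 : (1:ℕ) ≤ n := le_trans (by norm_num) hn
  have hn0 : (0:ℝ) ≤ (n:ℝ) := Nat.cast_nonneg n
  set p : ℝ := (n : ℝ) ^ ((1:ℝ)/3) with hpdef
  have hp0 : 0 ≤ p := Real.rpow_nonneg hn0 _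
  have hp1 : (1:ℝ) ≤ p := Real.one_le_rpow (by exact_mod_cast hn1) (by norm_num)
  have hppos : 0 < p := lt_of_lt_of_le one_pos hp1
  have hp3 : p ^ 3 = (n:ℝ) := by
    rw [hpdef, ← Real.rpow_natCast ((n:ℝ) ^ ((1:ℝ)/3)) 3, ← Real.rpow_mul hn0]
    norm_num
  set L : ℝ := (n : ℝ) ^ ((2:ℝ)/3) with hLdef
  have hL : L = p ^ 2 := by
    rw [hLdef, hpdef, ← Real.rpow_natCast ((n:ℝ) ^ ((1:ℝ)/3)) 2, ← Real.rpow_mul hn0]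
    norm_num
  set s : ℝ := p⁻¹ with hsdef
  have hs0 : 0 ≤ s := by positivity
  have hexp : (n:ℝ) * s ^ 2 / 2 - s * L = -(p/2) := by
    rw [← hp3, hL, hsdef]
    field_simp
    ring
  -- counting bad sign vectors
  have hbadcard : ∀ v : V,
      ((Finset.univ.filter (fun ε : Fin n → Bool =>
        L < |∑ i, (if ε i then (1:ℝ) else -1) * c v i|)).card : ℝ)
      ≤ 2 * (2 ^ n * Real.exp (-(p/2))) := by
    intro v
    have := chernoff_abs (c v) (hc1 v) s L hs0
    rwa [hexp] at this
  have main : ∃ ε : Fin n → Bool, ∀ v : V,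
      |∑ i, (if ε i then (1:ℝ) else -1) * c v i| ≤ L := by
    by_contra hcon
    push_neg at hcon
    have hsubset : (Finset.univ : Finset (Fin n → Bool)) ⊆
        Finset.univ.biUnion (fun v : V => Finset.univ.filter (fun ε : Fin n → Bool =>
          L < |∑ i, (if ε i then (1:ℝ) else -1) * c v i|)) := by
      intro ε _
      obtain ⟨v, hv⟩ := hcon ε
      exact Finset.mem_biUnion.2 ⟨v, Finset.mem_univ v, Finset.mem_filter.2 ⟨Finset.mem_univ _, hv⟩⟩
    have hcard1 : ((2:ℝ)) ^ n ≤ ∑ v : V, ((Finset.univ.filter (fun ε : Fin n → Bool =>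
          L < |∑ i, (if ε i then (1:ℝ) else -1) * c v i|)).card : ℝ) := by
      have h1 := Finset.card_le_card hsubset
      have h2 := Finset.card_biUnion_le (s := (Finset.univ : Finset V))
        (t := fun v : V => Finset.univ.filter (fun ε : Fin n → Bool =>
          L < |∑ i, (if ε i then (1:ℝ) else -1) * c v i|))
      have h3 : (Finset.univ : Finset (Fin n → Bool)).card = 2 ^ n := by
        simp [Finset.card_univ]
      have h4 : (2:ℕ) ^ n ≤ ∑ v : V, (Finset.univ.filter (fun ε : Fin n → Bool =>
          L < |∑ i, (if ε i then (1:ℝ) else -1) * c v i|)).card := by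
        rw [← h3]; exact le_trans h1 h2
      exact_mod_cast h4
    have hcard2 : ∑ v : V, ((Finset.univ.filter (fun ε : Fin n → Bool =>
          L < |∑ i, (if ε i then (1:ℝ) else -1) * c v i|)).card : ℝ)
        ≤ (2 * n) * (2 * (2 ^ n * Real.exp (-(p/2)))) := by
      calc ∑ v : V, ((Finset.univ.filter (fun ε : Fin n → Bool =>
            L < |∑ i, (if ε i then (1:ℝ) else -1) * c v i|)).card : ℝ)
          ≤ ∑ _v : V, (2 * (2 ^ n * Real.exp (-(p/2)))) :=
            Finset.sum_le_sum (fun v _ => hbadcard v)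
        _ = (Fintype.card V : ℝ) * (2 * (2 ^ n * Real.exp (-(p/2)))) := by
            rw [Finset.sum_const, Finset.card_univ, nsmul_eq_mul]
        _ = (2 * n) * (2 * (2 ^ n * Real.exp (-(p/2)))) := by
            rw [hV]; push_cast; ring
    have hnum := numeric_bound hn
    have hfinal : (2 * (n:ℝ)) * (2 * (2 ^ n * Real.exp (-(p/2)))) < 2 ^ n := by
      have h2n : (0:ℝ) < 2 ^ n := by positivity
      calc (2 * (n:ℝ)) * (2 * (2 ^ n * Real.exp (-(p/2))))
          = 2 ^ n * (4 * (n:ℝ) * Real.exp (-(p/2))) := by ring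
        _ < 2 ^ n * 1 := by
            apply mul_lt_mul_of_pos_left _ h2n
            exact hnum
        _ = 2 ^ n := mul_one _
    linarith
  obtain ⟨ε, hε⟩ := main
  set A : Finset V := Finset.image (pA ε) Finset.univ with hA
  set B : Finset V := Finset.image (pB ε) Finset.univ with hB
  have hdisj : Disjoint A B := by
    rw [Finset.disjoint_left]
    intro v hvA hvB
    obtain ⟨i, _, hi⟩ := Finset.mem_image.1 hvA
    obtain ⟨j, _, hj⟩ := Finset.mem_image.1 hvB
    have h := hi.trans hj.symm
    simp only [hpA, hpB] at h
    by_cases h1 : ε i = true <;> by_cases h2 : ε j = true <;> simp only [h1, h2, if_true,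
      if_false, Bool.not_eq_true] at h
    · exact hab _ _ h
    · have hij := hainj _ _ h
      subst hij
      simp [h1] at h2
    · have hij := hbinj _ _ h
      subst hij
      simp [h2] at h1
    · exact hab j i h.symm
  have hcardA : A.card = n := by
    rw [hA, Finset.card_image_of_injective _ (hpAinj ε), Finset.card_univ, Fintype.card_fin]
  have hcardB : B.card = n := by
    rw [hB, Finset.card_image_of_injective _ (hpBinj ε), Finset.card_univ, Fintype.card_fin]
  have hunion : A ∪ B = Finset.univ := by
    apply Finset.eq_univ_of_card
    rw [Finset.card_union_of_disjoint hdisj, hcardA, hcardB, hV]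
    omega
  have hmemA : ∀ i : Fin n, (pA ε i ∈ A) := fun i => Finset.mem_image_of_mem _ (Finset.mem_univ i)
  -- membership characterizations
  have hxA : ∀ i : Fin t, (x i ∈ A ↔ ε (Fin.castLE htn i) = true) := by
    intro i
    constructor
    · intro hxi
      obtain ⟨k, _, hk⟩ := Finset.mem_image.1 hxi
      rw [← (hcast i).1] at hk
      simp only [hpA] at hk
      split_ifs at hk with h1
      · rw [← hainj k _ hk]; exact h1
      · exact absurd hk.symm (hab _ _)
    · intro hj1
      have hpaj : pA ε (Fin.castLE htn i) = a (Fin.castLE htn i) := by simp [hpA, hj1]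
      rw [← (hcast i).1, ← hpaj]
      exact hmemA _
  have hyA : ∀ i : Fin t, (y i ∈ A ↔ ε (Fin.castLE htn i) = false) := by
    intro i
    constructor
    · intro hyi
      obtain ⟨k, _, hk⟩ := Finset.mem_image.1 hyi
      rw [← (hcast i).2] at hk
      simp only [hpA] at hk
      split_ifs at hk with h1
      · exact absurd hk (hab _ _)
      · rw [← hbinj k _ hk]; simpa using h1
    · intro hj0
      have hpaj : pA ε (Fin.castLE htn i) = b (Fin.castLE htn i) := by simp [hpA, hj0]
      rw [← (hcast i).2, ← hpaj]
      exact hmemA _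
  have hxor : ∀ i : Fin t, Xor' (x i ∈ A) (y i ∈ A) := by
    intro i
    rcases Bool.eq_false_or_eq_true (ε (Fin.castLE htn i)) with h | h
    · refine Or.inl ⟨(hxA i).2 h, fun hy => ?_⟩
      have hcontra := (hyA i).1 hy
      rw [h] at hcontra
      simp at hcontra
    · refine Or.inr ⟨(hyA i).2 h, fun hx => ?_⟩
      have hcontra := (hxA i).1 hx
      rw [h] at hcontra
      simp at hcontra
  -- degree computation
  have hdeg : ∀ v : V,
      ((A.filter fun w => G.Adj v w).card : ℝ) - ((B.filter fun w => G.Adj v w).card : ℝ)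
        = ∑ i, (if ε i then (1:ℝ) else -1) * c v i := by
    intro v
    have hAcard : ((A.filter fun w => G.Adj v w).card : ℝ)
        = ∑ i : Fin n, (if G.Adj v (pA ε i) then (1:ℝ) else 0) := by
      rw [hA, Finset.filter_image, Finset.card_image_of_injective _ (hpAinj ε),
        Finset.card_filter]
      push_cast
      rfl
    have hBcard : ((B.filter fun w => G.Adj v w).card : ℝ)
        = ∑ i : Fin n, (if G.Adj v (pB ε i) then (1:ℝ) else 0) := by
      rw [hB, Finset.filter_image, Finset.card_image_of_injective _ (hpBinj ε),
        Finset.card_filter]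
      push_cast
      rfl
    rw [hAcard, hBcard, ← Finset.sum_sub_distrib]
    apply Finset.sum_congr rfl
    intro i _
    rcases Bool.eq_false_or_eq_true (ε i) with h | h <;>
      simp [hpA, hpB, h, hcdef]
  refine ⟨A, B, hdisj, hunion, hcardA, hcardB, hxor, ?_⟩
  intro v
  rw [hdeg v]
  exact hε v
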